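/- A solution ψ on the class of monotone games with agent set N satisfies PO (Pareto optimality), ETP (equal treatment property) and M (marginality) if and only if ψ is the Shapley value solution φ. -/

import Mathlib

open Finset

/-- A monotone game on agent set `Fin n`: `u ∅ = 0` and `u` is monotone w.r.t. inclusion. -/
def IsMonotoneGame (n : ℕ) (u : Finset (Fin n) → ℝ) : Prop :=
  u ∅ = 0 ∧ ∀ S T : Finset (Fin n), S ⊆ T → u S ≤ u T

/-- The Shapley weight `w_S = |S|! (n - |S| - 1)! / n!`. -/
noncomputable def shapleyWeight (n : ℕ) (S : Finset (Fin n)) : ℝ :=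
  ((S.card.factorial * (n - S.card - 1).factorial : ℕ) : ℝ) / (n.factorial : ℝ)

/-- The Shapley value solution `φ_i(u) = ∑_{S ⊆ N \ {i}} w_S (u (S ∪ {i}) - u S)`. -/
noncomputable def shapley {n : ℕ} (u : Finset (Fin n) → ℝ) (i : Fin n) : ℝ :=
  ∑ S ∈ (Finset.univ.erase i).powerset, shapleyWeight n S * (u (insert i S) - u S)

namespace ShapAux

variable {n : ℕ}

/-- Harsanyi dividend. -/
noncomputable def div (u : Finset (Fin n) → ℝ) (T : Finset (Fin n)) : ℝ :=
  ∑ S ∈ T.powerset, (-1 : ℝ) ^ (T.card + S.card) * u S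

lemma neg_one_pow_sum (x : Finset (Fin n)) :
    (∑ m ∈ x.powerset, (-1 : ℝ) ^ m.card) = if x = ∅ then 1 else 0 := by
  have := Finset.sum_powerset_neg_one_pow_card (x := x)
  have h : ((∑ m ∈ x.powerset, (-1 : ℤ) ^ m.card : ℤ) : ℝ)
      = ∑ m ∈ x.powerset, (-1 : ℝ) ^ m.card := by push_cast; ring_nf
  rw [← h, this]
  split <;> norm_num

/-- key interval identity -/
lemma key (T R : Finset (Fin n)) (hRT : R ⊆ T) :
    (∑ S ∈ T.powerset.filter (fun S => R ⊆ S), (-1 : ℝ) ^ S.card)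
      = if R = T then (-1 : ℝ) ^ T.card else 0 := by
  classical
  have hbij : ∑ S ∈ T.powerset.filter (fun S => R ⊆ S), (-1 : ℝ) ^ S.card
      = ∑ A ∈ (T \ R).powerset, (-1 : ℝ) ^ (A ∪ R).card := by
    refine Finset.sum_nbij' (fun S => S \ R) (fun A => A ∪ R) ?_ ?_ ?_ ?_ ?_
    · intro S hS
      simp only [mem_filter, mem_powerset] at hS ⊢
      exact sdiff_subset_sdiff hS.1 (Finset.Subset.refl R)
    · intro A hA
      simp only [mem_powerset] at hA
      simp only [mem_filter, mem_powerset]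
      constructor
      · exact union_subset (hA.trans (sdiff_subset)) hRT
      · exact subset_union_right
    · intro S hS
      simp only [mem_filter, mem_powerset] at hS
      exact sdiff_union_of_subset hS.2
    · intro A hA
      simp only [mem_powerset] at hA
      have : Disjoint A R := disjoint_of_subset_left hA sdiff_disjoint
      exact union_sdiff_cancel_right this
    · intro S hS
      simp only [mem_filter, mem_powerset] at hS
      rw [sdiff_union_of_subset hS.2]
  rw [hbij]
  have hcard : ∀ A ∈ (T \ R).powerset, (A ∪ R).card = A.card + R.card := by
    intro A hA
    simp only [mem_powerset] at hA
    exact card_union_of_disjoint (disjoint_of_subset_left hA sdiff_disjoint)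
  calc ∑ A ∈ (T \ R).powerset, (-1 : ℝ) ^ (A ∪ R).card
      = ∑ A ∈ (T \ R).powerset, (-1 : ℝ) ^ A.card * (-1 : ℝ) ^ R.card := by
        refine Finset.sum_congr rfl fun A hA => ?_
        rw [hcard A hA, pow_add]
    _ = (if (T \ R) = ∅ then 1 else 0) * (-1 : ℝ) ^ R.card := by
        rw [← Finset.sum_mul, neg_one_pow_sum]
    _ = if R = T then (-1 : ℝ) ^ T.card else 0 := by
        by_cases h : R = T
        · subst h; simp
        · have : T \ R ≠ ∅ := by
            intro hemp
            exact h (Finset.Subset.antisymm hRT (by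
              intro x hx
              by_contra hxR
              exact absurd (Finset.mem_sdiff.mpr ⟨hx, hxR⟩) (by simp [hemp])))
          rw [if_neg this, if_neg h, zero_mul]

lemma swap_powerset (S : Finset (Fin n)) (f : Finset (Fin n) → Finset (Fin n) → ℝ) :
    ∑ T ∈ S.powerset, ∑ R ∈ T.powerset, f T R
      = ∑ R ∈ S.powerset, ∑ T ∈ S.powerset.filter (fun T => R ⊆ T), f T R := by
  classical
  have h1 : ∀ T ∈ S.powerset, ∑ R ∈ T.powerset, f T R
      = ∑ R ∈ S.powerset, if R ⊆ T then f T R else 0 := by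
    intro T hT
    simp only [mem_powerset] at hT
    have hpt : T.powerset = S.powerset.filter (fun R => R ⊆ T) := by
      ext R
      simp only [mem_powerset, mem_filter]
      exact ⟨fun h => ⟨h.trans hT, h⟩, fun h => h.2⟩
    rw [hpt, Finset.sum_filter]
  rw [Finset.sum_congr rfl h1, Finset.sum_comm]
  refine Finset.sum_congr rfl fun R _ => ?_
  rw [Finset.sum_filter]
/-- Möbius inversion: a game is the sum of dividends of its subsets. -/
lemma sum_div (u : Finset (Fin n) → ℝ) (S : Finset (Fin n)) :
    ∑ T ∈ S.powerset, div u T = u S := by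
  classical
  unfold div
  rw [swap_powerset S (fun T R => (-1 : ℝ) ^ (T.card + R.card) * u R)]
  have h : ∀ R ∈ S.powerset,
      (∑ T ∈ S.powerset.filter (fun T => R ⊆ T), (-1 : ℝ) ^ (T.card + R.card) * u R)
        = if R = S then u S else 0 := by
    intro R hR
    simp only [mem_powerset] at hR
    have : (∑ T ∈ S.powerset.filter (fun T => R ⊆ T), (-1 : ℝ) ^ (T.card + R.card) * u R)
        = (∑ T ∈ S.powerset.filter (fun T => R ⊆ T), (-1 : ℝ) ^ T.card)
          * ((-1 : ℝ) ^ R.card * u R) := by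
      rw [Finset.sum_mul]
      refine Finset.sum_congr rfl fun T _ => ?_
      rw [pow_add]; ring
    rw [this, key S R hR]
    by_cases h : R = S
    · subst h
      rw [if_pos rfl, if_pos rfl, ← mul_assoc, ← pow_add, ← two_mul, pow_mul]
      norm_num
    · rw [if_neg h, if_neg h, zero_mul]
  rw [Finset.sum_congr rfl h, Finset.sum_ite_eq' S.powerset S (fun _ => u S)]
  simp

/-- The dividends of a game given by coefficients are those coefficients. -/
lemma div_g (d : Finset (Fin n) → ℝ) (T : Finset (Fin n)) :
    div (fun S => ∑ R ∈ S.powerset, d R) T = d T := by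
  classical
  unfold div
  simp only [Finset.mul_sum]
  rw [swap_powerset T (fun S R => (-1 : ℝ) ^ (T.card + S.card) * d R)]
  have h : ∀ R ∈ T.powerset,
      (∑ S ∈ T.powerset.filter (fun S => R ⊆ S), (-1 : ℝ) ^ (T.card + S.card) * d R)
        = if R = T then d T else 0 := by
    intro R hR
    simp only [mem_powerset] at hR
    have : (∑ S ∈ T.powerset.filter (fun S => R ⊆ S), (-1 : ℝ) ^ (T.card + S.card) * d R)
        = (∑ S ∈ T.powerset.filter (fun S => R ⊆ S), (-1 : ℝ) ^ S.card)
          * ((-1 : ℝ) ^ T.card * d R) := by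
      rw [Finset.sum_mul]
      refine Finset.sum_congr rfl fun S _ => ?_
      rw [pow_add]; ring
    rw [this, key T R hR]
    by_cases h : R = T
    · subst h
      rw [if_pos rfl, if_pos rfl, ← mul_assoc, ← pow_add, ← two_mul, pow_mul]
      norm_num
    · rw [if_neg h, if_neg h, zero_mul]
  rw [Finset.sum_congr rfl h, Finset.sum_ite_eq' T.powerset T (fun _ => d T)]
  simp
lemma mem_P {i : Fin n} {S : Finset (Fin n)} :
    S ∈ (Finset.univ.erase i).powerset ↔ i ∉ S := by
  simp only [mem_powerset, Finset.subset_erase, subset_univ, true_and]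

lemma shapley_M (u v : Finset (Fin n) → ℝ) (i : Fin n)
    (h : ∀ S, u (insert i S) - u S = v (insert i S) - v S) :
    shapley u i = shapley v i := by
  unfold shapley
  exact Finset.sum_congr rfl fun S _ => by rw [h S]

lemma shapley_ETP (u : Finset (Fin n) → ℝ) (i j : Fin n)
    (h : ∀ S : Finset (Fin n), i ∉ S → j ∉ S →
      u (insert i S) - u S = u (insert j S) - u S) :
    shapley u i = shapley u j := by
  classical
  by_cases hij : i = j
  · rw [hij]
  unfold shapley
  rw [← Finset.sum_filter_add_sum_filter_not ((Finset.univ.erase i).powerset)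
        (fun S => j ∈ S),
      ← Finset.sum_filter_add_sum_filter_not ((Finset.univ.erase j).powerset)
        (fun S => i ∈ S)]
  have h1 : ∑ S ∈ ((Finset.univ.erase i).powerset.filter (fun S => j ∉ S)),
        shapleyWeight n S * (u (insert i S) - u S)
      = ∑ S ∈ ((Finset.univ.erase j).powerset.filter (fun S => i ∉ S)),
        shapleyWeight n S * (u (insert j S) - u S) := by
    have hset : ((Finset.univ.erase i).powerset.filter (fun S => j ∉ S))
        = ((Finset.univ.erase j).powerset.filter (fun S => i ∉ S)) := by
      ext S
      simp only [mem_filter, mem_P]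
      tauto
    rw [hset]
    refine Finset.sum_congr rfl fun S hS => ?_
    simp only [mem_filter, mem_P] at hS
    rw [h S hS.2 hS.1]
  have h2 : ∑ S ∈ ((Finset.univ.erase i).powerset.filter (fun S => j ∈ S)),
        shapleyWeight n S * (u (insert i S) - u S)
      = ∑ S ∈ ((Finset.univ.erase j).powerset.filter (fun S => i ∈ S)),
        shapleyWeight n S * (u (insert j S) - u S) := by
    refine Finset.sum_nbij' (fun S => insert i (S.erase j)) (fun S => insert j (S.erase i))
      ?_ ?_ ?_ ?_ ?_
    · intro S hS
      simp only [mem_filter, mem_P] at hS ⊢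
      constructor
      · intro hj
        rcases Finset.mem_insert.mp hj with h' | h'
        · exact hij h'.symm
        · exact (Finset.notMem_erase j S) h'
      · exact Finset.mem_insert_self i _
    · intro S hS
      simp only [mem_filter, mem_P] at hS ⊢
      constructor
      · intro hi
        rcases Finset.mem_insert.mp hi with h' | h'
        · exact hij h'
        · exact (Finset.notMem_erase i S) h'
      · exact Finset.mem_insert_self j _
    · intro S hS
      simp only [mem_filter, mem_P] at hS
      have hie : i ∉ S.erase j := fun h' => hS.1 (Finset.mem_of_mem_erase h')
      show insert j ((insert i (S.erase j)).erase i) = S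
      rw [Finset.erase_insert hie, Finset.insert_erase hS.2]
    · intro S hS
      simp only [mem_filter, mem_P] at hS
      have hje : j ∉ S.erase i := fun h' => hS.1 (Finset.mem_of_mem_erase h')
      show insert i ((insert j (S.erase i)).erase j) = S
      rw [Finset.erase_insert hje, Finset.insert_erase hS.2]
    · intro S hS
      simp only [mem_filter, mem_P] at hS
      have hie : i ∉ S.erase j := fun h' => hS.1 (Finset.mem_of_mem_erase h')
      have hcard : (insert i (S.erase j)).card = S.card := by
        rw [Finset.card_insert_of_notMem hie, Finset.card_erase_of_mem hS.2]
        have : 1 ≤ S.card := Finset.card_pos.mpr ⟨j, hS.2⟩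
        omega
      have hw : shapleyWeight n (insert i (S.erase j)) = shapleyWeight n S := by
        unfold shapleyWeight; rw [hcard]
      have hRi : i ∉ S.erase j := hie
      have hRj : j ∉ S.erase j := Finset.notMem_erase j S
      have huu : u (insert i (S.erase j)) = u (insert j (S.erase j)) := by
        have := h (S.erase j) hRi hRj
        linarith
      have hins : insert j (insert i (S.erase j)) = insert i S := by
        rw [Finset.insert_comm, Finset.insert_erase hS.2]
      rw [hw, hins, huu, Finset.insert_erase hS.2]
  rw [h1, h2]
noncomputable def wc (n k : ℕ) : ℝ :=
  ((k.factorial * (n - k - 1).factorial : ℕ) : ℝ) / (n.factorial : ℝ)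

lemma shapley_PO (hn : 1 ≤ n) (u : Finset (Fin n) → ℝ) (h0 : u ∅ = 0) :
    ∑ i, shapley u i = u Finset.univ := by
  classical
  have hsw : ∀ S : Finset (Fin n), shapleyWeight n S = wc n S.card := fun _ => rfl
  have hA : ∀ i : Fin n, ∑ S ∈ (Finset.univ.erase i).powerset,
      shapleyWeight n S * u (insert i S)
      = ∑ R ∈ Finset.univ.powerset.filter (fun R => i ∈ R), wc n (R.card - 1) * u R := by
    intro i
    refine Finset.sum_nbij' (fun S => insert i S) (fun R => R.erase i) ?_ ?_ ?_ ?_ ?_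
    · intro S hS
      simp only [mem_filter, mem_powerset, subset_univ, true_and]
      exact Finset.mem_insert_self i S
    · intro R hR
      simp only [mem_filter] at hR
      exact mem_P.mpr (Finset.notMem_erase i R)
    · intro S hS
      exact Finset.erase_insert (mem_P.mp hS)
    · intro R hR
      simp only [mem_filter] at hR
      exact Finset.insert_erase hR.2
    · intro S hS
      have hiS := mem_P.mp hS
      rw [hsw, Finset.card_insert_of_notMem hiS]
      simp
  have hB : ∀ i : Fin n, ∑ S ∈ (Finset.univ.erase i).powerset,
      shapleyWeight n S * u S
      = ∑ S ∈ Finset.univ.powerset.filter (fun S => i ∉ S), wc n S.card * u S := by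
    intro i
    refine Finset.sum_congr ?_ fun S _ => by rw [hsw]
    ext S
    simp only [mem_filter, mem_powerset, subset_univ, true_and, Finset.subset_erase]
  have expand : ∑ i, shapley u i
      = (∑ i : Fin n, ∑ R ∈ Finset.univ.powerset.filter (fun R => i ∈ R),
          wc n (R.card - 1) * u R)
        - (∑ i : Fin n, ∑ S ∈ Finset.univ.powerset.filter (fun S => i ∉ S),
          wc n S.card * u S) := by
    rw [← Finset.sum_sub_distrib]
    refine Finset.sum_congr rfl fun i _ => ?_
    rw [← hA i, ← hB i, ← Finset.sum_sub_distrib]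
    refine Finset.sum_congr rfl fun S _ => by ring
  rw [expand]
  -- swap sums
  have swapA : (∑ i : Fin n, ∑ R ∈ Finset.univ.powerset.filter (fun R => i ∈ R),
        wc n (R.card - 1) * u R)
      = ∑ R ∈ Finset.univ.powerset, (R.card : ℝ) * (wc n (R.card - 1) * u R) := by
    simp only [Finset.sum_filter]
    rw [Finset.sum_comm]
    refine Finset.sum_congr rfl fun R _ => ?_
    rw [Finset.sum_ite_mem, Finset.univ_inter, Finset.sum_const, nsmul_eq_mul]
  have swapB : (∑ i : Fin n, ∑ S ∈ Finset.univ.powerset.filter (fun S => i ∉ S),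
        wc n S.card * u S)
      = ∑ S ∈ Finset.univ.powerset, ((n - S.card : ℕ) : ℝ) * (wc n S.card * u S) := by
    simp only [Finset.sum_filter]
    rw [Finset.sum_comm]
    refine Finset.sum_congr rfl fun S _ => ?_
    have : ∀ i : Fin n, (if i ∉ S then wc n S.card * u S else 0)
        = (if i ∈ Sᶜ then wc n S.card * u S else 0) := by
      intro i; simp [Finset.mem_compl]
    rw [Finset.sum_congr rfl fun i _ => this i, Finset.sum_ite_mem, Finset.univ_inter,
      Finset.sum_const, nsmul_eq_mul, Finset.card_compl]
    simp
  rw [swapA, swapB, ← Finset.sum_sub_distrib]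
  have hfac : (0 : ℝ) < (n.factorial : ℝ) := by exact_mod_cast n.factorial_pos
  have key : ∀ R ∈ Finset.univ.powerset,
      ((R.card : ℝ) * (wc n (R.card - 1) * u R) - ((n - R.card : ℕ) : ℝ) * (wc n R.card * u R))
        = if R = Finset.univ then u Finset.univ else 0 := by
    intro R _
    rcases Nat.eq_zero_or_pos R.card with hr0 | hrpos
    · have hRempty : R = ∅ := Finset.card_eq_zero.mp hr0
      subst hRempty
      have : (∅ : Finset (Fin n)) ≠ Finset.univ := by
        intro h
        have := Finset.card_univ (α := Fin n) ▸ congrArg Finset.card h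
        simp at this; omega
      rw [if_neg this, h0]
      simp
    · by_cases hRuniv : R = Finset.univ
      · subst hRuniv
        rw [if_pos rfl]
        have hcard : (Finset.univ : Finset (Fin n)).card = n := by simp
        rw [hcard]
        have h1 : n - n = 0 := by omega
        have h2 : wc n (n - 1) = ((n-1).factorial : ℝ) / (n.factorial : ℝ) := by
          unfold wc
          have : n - (n - 1) - 1 = 0 := by omega
          rw [this]
          push_cast [Nat.factorial]
          ring
        rw [h1, h2]
        have h3 : (n : ℝ) * ((n-1).factorial : ℝ) = (n.factorial : ℝ) := by
          have := Nat.mul_factorial_pred (n := n) (by omega)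
          exact_mod_cast congrArg (Nat.cast : ℕ → ℝ) this
        push_cast
        field_simp
        linear_combination u Finset.univ * h3
      · rw [if_neg hRuniv]
        set r := R.card with hr
        have hrn : r < n := by
          have hsub : R ⊆ Finset.univ := Finset.subset_univ R
          have hlt : r ≤ n := by
            have := Finset.card_le_card hsub
            simpa using this
        -- r < n since R ≠ univ
          rcases lt_or_eq_of_le hlt with h | h
          · exact h
          · exfalso
            exact hRuniv (Finset.eq_univ_of_card R (by simpa using h))
        have e1 : (r : ℝ) * wc n (r - 1) = ((r.factorial * (n - r).factorial : ℕ) : ℝ) / (n.factorial : ℝ) := by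
          unfold wc
          have h1 : n - (r - 1) - 1 = n - r := by omega
          rw [h1]
          have h2 : (r : ℕ) * ((r-1).factorial * (n-r).factorial) = r.factorial * (n-r).factorial := by
            rw [← mul_assoc, Nat.mul_factorial_pred hrpos.ne']
          push_cast [← h2]
          ring
        have e2 : ((n - r : ℕ) : ℝ) * wc n r = ((r.factorial * (n - r).factorial : ℕ) : ℝ) / (n.factorial : ℝ) := by
          unfold wc
          have h2 : (n - r) * (r.factorial * (n - r - 1).factorial) = r.factorial * (n-r).factorial := by
            have h3 : (n - r) * (n - r - 1).factorial = (n - r).factorial :=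
              Nat.mul_factorial_pred (by omega)
            calc (n - r) * (r.factorial * (n - r - 1).factorial)
                = r.factorial * ((n-r) * (n - r - 1).factorial) := by ring
              _ = r.factorial * (n-r).factorial := by rw [h3]
          push_cast [← h2]
          ring
        have : (r : ℝ) * (wc n (r - 1) * u R) - ((n - r : ℕ) : ℝ) * (wc n r * u R)
            = ((r : ℝ) * wc n (r - 1) - ((n - r : ℕ) : ℝ) * wc n r) * u R := by ring
        rw [this, e1, e2]
        ring
  rw [Finset.sum_congr rfl key, Finset.sum_ite_eq' Finset.univ.powerset Finset.univ
    (fun _ => u Finset.univ)]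
  simp
noncomputable def K2 (u : Finset (Fin n) → ℝ) : Finset (Finset (Fin n)) :=
  Finset.univ.powerset.filter (fun T => 2 ≤ T.card ∧ div u T ≠ 0)

noncomputable def Tst (u : Finset (Fin n) → ℝ) : Finset (Fin n) := (K2 u).inf id

noncomputable def m1 (u : Finset (Fin n) → ℝ) : ℕ := ∑ T ∈ K2 u, (T.card - 1)

lemma mem_K2 {u : Finset (Fin n) → ℝ} {T : Finset (Fin n)} :
    T ∈ K2 u ↔ 2 ≤ T.card ∧ div u T ≠ 0 := by
  unfold K2
  rw [Finset.mem_filter]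
  simp [Finset.subset_univ]

lemma Tst_subset {u : Finset (Fin n) → ℝ} {T : Finset (Fin n)} (hT : T ∈ K2 u) :
    Tst u ⊆ T := Finset.inf_le (f := id) hT

lemma mem_Tst {u : Finset (Fin n) → ℝ} {i : Fin n} :
    i ∈ Tst u ↔ ∀ T ∈ K2 u, i ∈ T := by
  constructor
  · intro h T hT
    exact Tst_subset hT h
  · intro h
    have : ({i} : Finset (Fin n)) ≤ (K2 u).inf id := by
      refine Finset.le_inf fun T hT => ?_
      simpa using h T hT
    exact Finset.singleton_subset_iff.mp this

lemma monotone_of_insert (u : Finset (Fin n) → ℝ)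
    (h : ∀ j S, j ∉ S → u S ≤ u (insert j S)) :
    ∀ S T : Finset (Fin n), S ⊆ T → u S ≤ u T := by
  have key : ∀ k (S T : Finset (Fin n)), S ⊆ T → (T \ S).card = k → u S ≤ u T := by
    intro k
    induction k with
    | zero =>
      intro S T hST hc
      have : T \ S = ∅ := Finset.card_eq_zero.mp hc
      have hTS : T ⊆ S := by
        intro x hx
        by_contra hxS
        have : x ∈ T \ S := Finset.mem_sdiff.mpr ⟨hx, hxS⟩
        simp [‹T \ S = ∅›] at this
      rw [Finset.Subset.antisymm hST hTS]
    | succ k ih =>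
      intro S T hST hc
      obtain ⟨j, hj⟩ : (T \ S).Nonempty := Finset.card_pos.mp (by omega)
      have hjT : j ∈ T := (Finset.mem_sdiff.mp hj).1
      have hjS : j ∉ S := (Finset.mem_sdiff.mp hj).2
      refine (h j S hjS).trans (ih (insert j S) T (Finset.insert_subset hjT hST) ?_)
      have : T \ insert j S = (T \ S).erase j := by
        ext x
        simp only [Finset.mem_sdiff, Finset.mem_insert, Finset.mem_erase]
        tauto
      rw [this, Finset.card_erase_of_mem hj, hc]
      omega
  intro S T hST
  exact key ((T \ S).card) S T hST rfl

lemma sum_powerset_card_one (S : Finset (Fin n)) (f : Finset (Fin n) → ℝ) :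
    ∑ T ∈ S.powerset.filter (fun T => T.card = 1), f T = ∑ x ∈ S, f {x} := by
  classical
  have himg : S.powerset.filter (fun T => T.card = 1) = S.image (fun x => ({x} : Finset (Fin n))) := by
    ext T
    simp only [Finset.mem_filter, Finset.mem_powerset, Finset.mem_image]
    constructor
    · rintro ⟨hsub, hcard⟩
      obtain ⟨x, rfl⟩ := Finset.card_eq_one.mp hcard
      exact ⟨x, by simpa using hsub, rfl⟩
    · rintro ⟨x, hx, rfl⟩
      simp [Finset.singleton_subset_iff.mpr hx]
  rw [himg, Finset.sum_image]
  intro x _ y _ hxy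
  exact Finset.singleton_inj.mp hxy

lemma div_singleton (u : Finset (Fin n) → ℝ) (h0 : u ∅ = 0) (i : Fin n) :
    div u {i} = u {i} := by
  unfold div
  rw [show ({i} : Finset (Fin n)) = insert i ∅ from rfl,
    Finset.sum_powerset_insert (by simp)]
  simp [h0]

lemma marg_eq (u : Finset (Fin n) → ℝ) (h0 : u ∅ = 0) (i : Fin n) (S : Finset (Fin n))
    (hiS : i ∉ S) :
    u (insert i S) - u S
      = u {i} + ∑ T ∈ (K2 u).filter (fun T => i ∈ T ∧ T ⊆ insert i S), div u T := by
  classical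
  have h1 : u (insert i S) = ∑ T ∈ (insert i S).powerset, div u T := (sum_div u _).symm
  have h2 : u S = ∑ T ∈ S.powerset, div u T := (sum_div u _).symm
  have hsplit := Finset.sum_filter_add_sum_filter_not ((insert i S).powerset)
    (fun T => i ∈ T) (div u)
  have hnot : (insert i S).powerset.filter (fun T => i ∉ T) = S.powerset := by
    ext T
    simp only [Finset.mem_filter, Finset.mem_powerset]
    constructor
    · rintro ⟨hsub, hiT⟩
      intro x hx
      rcases Finset.mem_insert.mp (hsub hx) with h | h
      · exact absurd (h ▸ hx) hiT
      · exact h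
    · intro hsub
      exact ⟨hsub.trans (Finset.subset_insert i S), fun hi => hiS (hsub hi)⟩
  set F := (insert i S).powerset.filter (fun T => i ∈ T) with hF
  have hFS : u (insert i S) - u S = ∑ T ∈ F, div u T := by
    rw [h1, h2, ← hsplit, hnot]; ring
  have hiF : ({i} : Finset (Fin n)) ∈ F := by
    simp [hF, Finset.mem_filter, Finset.insert_subset_iff]
  have hsum : ∑ T ∈ F, div u T = div u {i} + ∑ T ∈ F.erase {i}, div u T :=
    (Finset.add_sum_erase F (div u) hiF).symm
  have hsub2 : ∑ T ∈ F.erase {i}, div u T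
      = ∑ T ∈ (K2 u).filter (fun T => i ∈ T ∧ T ⊆ insert i S), div u T := by
    refine (Finset.sum_subset ?_ ?_).symm
    · intro T hT
      rw [Finset.mem_filter] at hT
      have hK := hT.1
      have hiT := hT.2.1
      have hTsub := hT.2.2
      rw [Finset.mem_erase]
      constructor
      · intro h
        have := mem_K2.mp hK
        rw [h] at this
        simp at this
      · simp [hF, Finset.mem_filter, Finset.mem_powerset]
        exact ⟨hTsub, hiT⟩
    · intro T hT hT2
      rw [Finset.mem_erase] at hT
      simp only [hF, Finset.mem_filter, Finset.mem_powerset] at hT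
      by_contra hdiv
      apply hT2
      rw [Finset.mem_filter, mem_K2]
      refine ⟨⟨?_, hdiv⟩, hT.2.2, hT.2.1⟩
      have : ({i} : Finset (Fin n)) ⊂ T :=
        Finset.ssubset_iff_subset_ne.mpr ⟨Finset.singleton_subset_iff.mpr hT.2.2, fun h => hT.1 h.symm⟩
      have := Finset.card_lt_card this
      simp at this
      omega
  rw [hFS, hsum, hsub2, div_singleton u h0 i]
set_option maxHeartbeats 1600000 in
lemma caseA (ψ : (Finset (Fin n) → ℝ) → Fin n → ℝ)
    (hM : ∀ u v, IsMonotoneGame n u → IsMonotoneGame n v → ∀ i : Fin n,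
        (∀ S : Finset (Fin n), u (insert i S) - u S = v (insert i S) - v S) →
        ψ u i = ψ v i)
    (u : Finset (Fin n) → ℝ) (hu : IsMonotoneGame n u) (i : Fin n) (hi : i ∉ Tst u)
    (IH : ∀ w, IsMonotoneGame n w → m1 w < m1 u → ∀ j, ψ w j = shapley w j) :
    ψ u i = shapley u i := by
  classical
  obtain ⟨T₀, hT₀, hiT₀⟩ : ∃ T₀ ∈ K2 u, i ∉ T₀ := by
    by_contra h
    push_neg at h
    exact hi (mem_Tst.mpr h)
  have hT₀card : 2 ≤ T₀.card := (mem_K2.mp hT₀).1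
  set c := div u T₀ with hc
  set D := |c| with hD
  set v : Finset (Fin n) → ℝ :=
    fun S => u S - c * (if T₀ ⊆ S then 1 else 0) + D * ((S ∩ T₀).card : ℝ) with hv
  -- v ∅ = 0
  have hv0 : v ∅ = 0 := by
    have h1 : ¬ T₀ ⊆ ∅ := by
      intro h
      have := Finset.card_le_card h
      rw [Finset.card_empty] at this
      omega
    simp [hv, h1, hu.1]
  -- same marginals for i
  have hmarg : ∀ S, u (insert i S) - u S = v (insert i S) - v S := by
    intro S
    by_cases hiS : i ∈ S
    · rw [Finset.insert_eq_self.mpr hiS]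
      ring
    · have h1 : (T₀ ⊆ insert i S) ↔ (T₀ ⊆ S) := by
        constructor
        · intro h x hx
          rcases Finset.mem_insert.mp (h hx) with h' | h'
          · exact absurd (h' ▸ hx) hiT₀
          · exact h'
        · intro h
          exact h.trans (Finset.subset_insert i S)
      have h2 : insert i S ∩ T₀ = S ∩ T₀ := Finset.insert_inter_of_notMem hiT₀
      simp only [hv, h2]
      by_cases h3 : T₀ ⊆ S
      · rw [if_pos h3, if_pos (h1.mpr h3)]; ring
      · rw [if_neg h3, if_neg (fun h => h3 (h1.mp h))]; ring
  -- v is monotone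
  have hvmono : IsMonotoneGame n v := by
    refine ⟨hv0, monotone_of_insert v ?_⟩
    intro j S hjS
    have humar : u S ≤ u (insert j S) := hu.2 S (insert j S) (Finset.subset_insert j S)
    by_cases hjT₀ : j ∈ T₀
    · have h2 : insert j S ∩ T₀ = insert j (S ∩ T₀) := Finset.insert_inter_of_mem hjT₀
      have h3 : (insert j (S ∩ T₀)).card = (S ∩ T₀).card + 1 :=
        Finset.card_insert_of_notMem (fun h => hjS (Finset.mem_inter.mp h).1)
      have habs := abs_cases c
      by_cases h4 : T₀ ⊆ S
      · have h5 : T₀ ⊆ insert j S := h4.trans (Finset.subset_insert j S)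
        simp only [hv, h2, h3, if_pos h4, if_pos h5]
        push_cast
        rcases habs with ⟨he, _⟩ | ⟨he, _⟩ <;> nlinarith [abs_nonneg c]
      · by_cases h5 : T₀ ⊆ insert j S
        · simp only [hv, h2, h3, if_neg h4, if_pos h5]
          push_cast
          rcases habs with ⟨he, _⟩ | ⟨he, _⟩ <;> nlinarith [abs_nonneg c]
        · simp only [hv, h2, h3, if_neg h4, if_neg h5]
          push_cast
          nlinarith [abs_nonneg c]
    · have h1 : (T₀ ⊆ insert j S) ↔ (T₀ ⊆ S) := by
        constructor
        · intro h x hx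
          rcases Finset.mem_insert.mp (h hx) with h' | h'
          · exact absurd (h' ▸ hx) hjT₀
          · exact h'
        · intro h
          exact h.trans (Finset.subset_insert j S)
      have h2 : insert j S ∩ T₀ = S ∩ T₀ := Finset.insert_inter_of_notMem hjT₀
      simp only [hv, h2]
      by_cases h3 : T₀ ⊆ S
      · rw [if_pos h3, if_pos (h1.mpr h3)]; linarith
      · rw [if_neg h3, if_neg (fun h => h3 (h1.mp h))]; linarith
  -- dividends of v
  set dv : Finset (Fin n) → ℝ :=
    fun T => div u T + (if T = T₀ then -c else 0)
      + (if T.card = 1 ∧ T ⊆ T₀ then D else 0) with hdv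
  have hveq : v = fun S => ∑ R ∈ S.powerset, dv R := by
    funext S
    have e1 : ∑ R ∈ S.powerset, dv R
        = (∑ R ∈ S.powerset, div u R) + (∑ R ∈ S.powerset, if R = T₀ then -c else 0)
          + (∑ R ∈ S.powerset, if R.card = 1 ∧ R ⊆ T₀ then D else 0) := by
      simp only [hdv, Finset.sum_add_distrib]
    have e2 : (∑ R ∈ S.powerset, if R = T₀ then -c else 0)
        = if T₀ ⊆ S then -c else 0 := by
      rw [Finset.sum_ite_eq' S.powerset T₀ (fun _ => -c)]
      simp [Finset.mem_powerset]
    have e3 : (∑ R ∈ S.powerset, if R.card = 1 ∧ R ⊆ T₀ then D else 0)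
        = D * ((S ∩ T₀).card : ℝ) := by
      have step1 : (∑ R ∈ S.powerset, if R.card = 1 ∧ R ⊆ T₀ then D else 0)
          = ∑ R ∈ S.powerset.filter (fun R => R.card = 1), (if R ⊆ T₀ then D else 0) := by
        rw [Finset.sum_filter]
        refine Finset.sum_congr rfl fun R _ => ?_
        split_ifs with h1 h2 h3 <;> first | rfl | (exfalso; tauto)
      rw [step1, sum_powerset_card_one S (fun T => if T ⊆ T₀ then D else 0)]
      have step2 : ∀ x ∈ S, (if ({x} : Finset (Fin n)) ⊆ T₀ then D else 0)
          = if x ∈ T₀ then D else 0 := by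
        intro x _
        simp [Finset.singleton_subset_iff]
      rw [Finset.sum_congr rfl step2, Finset.sum_ite_mem, Finset.sum_const, nsmul_eq_mul]
      ring
    rw [e1, e2, e3, sum_div]
    simp only [hv]
    by_cases h3 : T₀ ⊆ S
    · rw [if_pos h3, if_pos h3]; ring
    · rw [if_neg h3, if_neg h3]; ring
  have hdivv : ∀ T, div v T = dv T := by
    intro T
    rw [hveq, div_g]
  -- K2 v
  have hK2v : K2 v = (K2 u).erase T₀ := by
    ext T
    rw [Finset.mem_erase, mem_K2, mem_K2, hdivv]
    constructor
    · rintro ⟨hcard, hne⟩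
      simp only [hdv] at hne
      have h1 : ¬ (T.card = 1 ∧ T ⊆ T₀) := fun h => by omega
      rw [if_neg h1] at hne
      by_cases h2 : T = T₀
      · rw [if_pos h2] at hne
        simp [h2, hc] at hne
      · rw [if_neg h2] at hne
        simp at hne
        exact ⟨h2, hcard, hne⟩
    · rintro ⟨hne, hcard, hdu⟩
      refine ⟨hcard, ?_⟩
      simp only [hdv]
      have h1 : ¬ (T.card = 1 ∧ T ⊆ T₀) := fun h => by omega
      rw [if_neg h1, if_neg hne]
      simpa using hdu
  -- m1 v < m1 u
  have hm1 : m1 v < m1 u := by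
    have hadd : ∑ T ∈ (K2 u).erase T₀, (T.card - 1) + (T₀.card - 1)
        = ∑ T ∈ K2 u, (T.card - 1) := Finset.sum_erase_add (K2 u) (fun T => T.card - 1) hT₀
    have hm1v : m1 v = ∑ T ∈ (K2 u).erase T₀, (T.card - 1) := by
      unfold m1
      rw [hK2v]
    rw [hm1v]
    unfold m1
    omega
  -- conclude
  have h1 : ψ u i = ψ v i := hM u v hu hvmono i hmarg
  have h2 : ψ v i = shapley v i := IH v hvmono hm1 i
  have h3 : shapley v i = shapley u i := shapley_M v u i (fun S => (hmarg S).symm)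
  rw [h1, h2, h3]

set_option maxHeartbeats 3200000 in
lemma uniq (hn : 1 ≤ n) (ψ : (Finset (Fin n) → ℝ) → Fin n → ℝ)
    (hPO : ∀ u, IsMonotoneGame n u → ∑ i, ψ u i = u Finset.univ)
    (hETP : ∀ u, IsMonotoneGame n u → ∀ i j : Fin n,
        (∀ S : Finset (Fin n), i ∉ S → j ∉ S →
          u (insert i S) - u S = u (insert j S) - u S) →
        ψ u i = ψ u j)
    (hM : ∀ u v, IsMonotoneGame n u → IsMonotoneGame n v → ∀ i : Fin n,
        (∀ S : Finset (Fin n), u (insert i S) - u S = v (insert i S) - v S) →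
        ψ u i = ψ v i) :
    ∀ u, IsMonotoneGame n u → ∀ i, ψ u i = shapley u i := by
  classical
  suffices H : ∀ m u, IsMonotoneGame n u → m1 u = m → ∀ i, ψ u i = shapley u i by
    intro u hu i
    exact H (m1 u) u hu rfl i
  intro m
  induction m using Nat.strong_induction_on with
  | _ m IH =>
  intro u hu hm i
  have IH' : ∀ w, IsMonotoneGame n w → m1 w < m1 u → ∀ j, ψ w j = shapley w j := by
    intro w hw hlt j
    exact IH (m1 w) (hm ▸ hlt) w hw rfl j
  by_cases hi : i ∈ Tst u
  swap
  · exact caseA ψ hM u hu i hi IH'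
  -- Case B : i ∈ Tst u
  set K := K2 u with hK
  set Ts := Tst u with hTs
  set a := u {i} with ha
  have ha0 : 0 ≤ a := by
    have := hu.2 ∅ {i} (Finset.empty_subset _)
    rw [hu.1] at this
    exact this
  set Dd := a + ∑ T ∈ K, |div u T| with hDd
  have hDd0 : 0 ≤ Dd := by
    have : 0 ≤ ∑ T ∈ K, |div u T| := Finset.sum_nonneg fun T _ => abs_nonneg _
    linarith
  set v : Finset (Fin n) → ℝ := fun S =>
    (∑ T ∈ K.filter (fun T => T ⊆ S), div u T)
      + a * ((S ∩ Ts).card : ℝ) + Dd * ((S \ Ts).card : ℝ) with hv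
  -- marginal formula for v
  have hvmarg : ∀ j S, j ∉ S → v (insert j S) - v S
      = (∑ T ∈ K.filter (fun T => j ∈ T ∧ T ⊆ insert j S), div u T)
        + (if j ∈ Ts then a else Dd) := by
    intro j S hjS
    have hp : (∑ T ∈ K.filter (fun T => T ⊆ insert j S), div u T)
        - (∑ T ∈ K.filter (fun T => T ⊆ S), div u T)
        = ∑ T ∈ K.filter (fun T => j ∈ T ∧ T ⊆ insert j S), div u T := by
      have hsplit := Finset.sum_filter_add_sum_filter_not
        (K.filter (fun T => T ⊆ insert j S)) (fun T => j ∈ T) (div u)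
      have h1 : (K.filter (fun T => T ⊆ insert j S)).filter (fun T => j ∉ T)
          = K.filter (fun T => T ⊆ S) := by
        ext T
        simp only [Finset.mem_filter]
        constructor
        · rintro ⟨⟨hTK, hsub⟩, hjT⟩
          refine ⟨hTK, fun x hx => ?_⟩
          rcases Finset.mem_insert.mp (hsub hx) with h' | h'
          · exact absurd (h' ▸ hx) hjT
          · exact h'
        · rintro ⟨hTK, hsub⟩
          exact ⟨⟨hTK, hsub.trans (Finset.subset_insert j S)⟩,
            fun hj => hjS (hsub hj)⟩
      have h2 : (K.filter (fun T => T ⊆ insert j S)).filter (fun T => j ∈ T)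
          = K.filter (fun T => j ∈ T ∧ T ⊆ insert j S) := by
        ext T
        simp only [Finset.mem_filter]
        tauto
      rw [← h2, ← h1]
      linarith [hsplit]
    by_cases hjTs : j ∈ Ts
    · have hc1 : insert j S ∩ Ts = insert j (S ∩ Ts) := Finset.insert_inter_of_mem hjTs
      have hc2 : (insert j (S ∩ Ts)).card = (S ∩ Ts).card + 1 :=
        Finset.card_insert_of_notMem (fun h => hjS (Finset.mem_inter.mp h).1)
      have hc3 : insert j S \ Ts = S \ Ts := by
        ext x
        simp only [Finset.mem_sdiff, Finset.mem_insert]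
        constructor
        · rintro ⟨h1 | h1, h2⟩
          · exact absurd (h1 ▸ hjTs) h2
          · exact ⟨h1, h2⟩
        · tauto
      rw [if_pos hjTs]
      simp only [hv, hc1, hc2, hc3]
      push_cast
      rw [← hp]
      ring
    · have hc1 : insert j S ∩ Ts = S ∩ Ts := Finset.insert_inter_of_notMem hjTs
      have hc3 : insert j S \ Ts = insert j (S \ Ts) := by
        ext x
        simp only [Finset.mem_sdiff, Finset.mem_insert]
        constructor
        · rintro ⟨h1 | h1, h2⟩
          · exact Or.inl h1
          · exact Or.inr ⟨h1, h2⟩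
        · rintro (h1 | ⟨h1, h2⟩)
          · exact ⟨Or.inl h1, h1 ▸ hjTs⟩
          · exact ⟨Or.inr h1, h2⟩
      have hc4 : (insert j (S \ Ts)).card = (S \ Ts).card + 1 :=
        Finset.card_insert_of_notMem (fun h => hjS (Finset.mem_sdiff.mp h).1)
      rw [if_neg hjTs]
      simp only [hv, hc1, hc3, hc4]
      push_cast
      rw [← hp]
      ring
  -- same marginals for i
  have hbmarg : ∀ S, u (insert i S) - u S = v (insert i S) - v S := by
    intro S
    by_cases hiS : i ∈ S
    · rw [Finset.insert_eq_self.mpr hiS]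
      ring
    · rw [hvmarg i S hiS, if_pos hi, marg_eq u hu.1 i S hiS]
      ring
  -- empty
  have hv0 : v ∅ = 0 := by
    have h1 : K.filter (fun T => T = (∅ : Finset (Fin n))) = ∅ := by
      refine Finset.filter_eq_empty_iff.mpr ?_
      intro T hT hsub
      have h2 := (mem_K2.mp hT).1
      rw [hsub] at h2
      simp at h2
    simp [hv, h1]
  -- key fact: marginal of j ∈ Ts when another member of Ts is missing
  have hconst : ∀ j S, j ∈ Ts → j ∉ S → (∃ k, k ∈ Ts ∧ k ∉ insert j S) →
      v (insert j S) - v S = a := by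
    intro j S hjTs hjS ⟨k, hkTs, hk⟩
    rw [hvmarg j S hjS, if_pos hjTs]
    have hempty : K.filter (fun T => j ∈ T ∧ T ⊆ insert j S) = ∅ := by
      refine Finset.filter_eq_empty_iff.mpr ?_
      rintro T hT ⟨hjT, hsub⟩
      exact hk (hsub (Tst_subset hT hkTs))
    rw [hempty]
    simp
  -- monotonicity of v
  have hvmono : IsMonotoneGame n v := by
    refine ⟨hv0, monotone_of_insert v ?_⟩
    intro j S hjS
    have key : 0 ≤ v (insert j S) - v S := by
      by_cases hjTs : j ∈ Ts
      · by_cases hij : i = j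
        · subst hij
          rw [← hbmarg S]
          have := hu.2 S (insert i S) (Finset.subset_insert i S)
          linarith
        · by_cases hiS : i ∈ S
          · -- i ∈ S, j ≠ i
            set R := (insert j S).erase i with hR
            have hiR : i ∉ R := Finset.notMem_erase i _
            have hins : insert i R = insert j S := by
              rw [hR, Finset.insert_erase (Finset.mem_insert_of_mem hiS)]
            have hmono : 0 ≤ u (insert i R) - u R := by
              have := hu.2 R (insert i R) (Finset.subset_insert i R)
              linarith
            rw [marg_eq u hu.1 i R hiR, hins] at hmono
            rw [hvmarg j S hjS, if_pos hjTs]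
            have hfe : K.filter (fun T => j ∈ T ∧ T ⊆ insert j S)
                = K.filter (fun T => i ∈ T ∧ T ⊆ insert j S) := by
              ext T
              simp only [Finset.mem_filter]
              constructor
              · rintro ⟨hTK, _, hsub⟩
                exact ⟨hTK, Tst_subset hTK hi, hsub⟩
              · rintro ⟨hTK, _, hsub⟩
                exact ⟨hTK, Tst_subset hTK hjTs, hsub⟩
            rw [hfe]
            linarith [hmono]
          · -- i ∉ S, i ≠ j
            have : v (insert j S) - v S = a := by
              refine hconst j S hjTs hjS ⟨i, hi, ?_⟩
              intro hmem
              rcases Finset.mem_insert.mp hmem with h' | h'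
              · exact hij h'
              · exact hiS h'
            linarith [this, ha0]
      · rw [hvmarg j S hjS, if_neg hjTs]
        have hb1 : |∑ T ∈ K.filter (fun T => j ∈ T ∧ T ⊆ insert j S), div u T|
            ≤ ∑ T ∈ K.filter (fun T => j ∈ T ∧ T ⊆ insert j S), |div u T| :=
          Finset.abs_sum_le_sum_abs _ _
        have hb2 : ∑ T ∈ K.filter (fun T => j ∈ T ∧ T ⊆ insert j S), |div u T|
            ≤ ∑ T ∈ K, |div u T| :=
          Finset.sum_le_sum_of_subset_of_nonneg (Finset.filter_subset _ _)
            (fun T _ _ => abs_nonneg _)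
        have := abs_le.mp (hb1.trans hb2)
        simp only [hDd]
        linarith [this.1, ha0]
    linarith [key]
  -- dividends of v
  set dv : Finset (Fin n) → ℝ := fun T =>
    if T.card = 1 then (if T ⊆ Ts then a else Dd)
    else (if T ∈ K then div u T else 0) with hdv
  have hveq : v = fun S => ∑ R ∈ S.powerset, dv R := by
    funext S
    have hsplit := Finset.sum_filter_add_sum_filter_not S.powerset
      (fun T => T.card = 1) dv
    have h1 : ∑ R ∈ S.powerset.filter (fun T => T.card = 1), dv R
        = a * ((S ∩ Ts).card : ℝ) + Dd * ((S \ Ts).card : ℝ) := by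
      have e1 : ∀ R ∈ S.powerset.filter (fun T => T.card = 1), dv R
          = (if R ⊆ Ts then a else Dd) := by
        intro R hR
        rw [Finset.mem_filter] at hR
        simp only [hdv, if_pos hR.2]
      rw [Finset.sum_congr rfl e1,
        sum_powerset_card_one S (fun T => if T ⊆ Ts then a else Dd)]
      have e2 : ∀ x ∈ S, (if ({x} : Finset (Fin n)) ⊆ Ts then a else Dd)
          = if x ∈ Ts then a else Dd := by
        intro x _
        simp [Finset.singleton_subset_iff]
      rw [Finset.sum_congr rfl e2]
      rw [← Finset.sum_filter_add_sum_filter_not S (fun x => x ∈ Ts)]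
      have e3 : S.filter (fun x => x ∈ Ts) = S ∩ Ts := by
        ext x; simp [Finset.mem_inter]
      have e4 : S.filter (fun x => x ∉ Ts) = S \ Ts := by
        ext x; simp [Finset.mem_sdiff]
      rw [Finset.sum_congr e3 (fun x hx => if_pos (Finset.mem_inter.mp hx).2),
        Finset.sum_congr e4 (fun x hx => if_neg (Finset.mem_sdiff.mp hx).2)]
      rw [Finset.sum_const, Finset.sum_const, nsmul_eq_mul, nsmul_eq_mul]
      ring
    have h2 : ∑ R ∈ S.powerset.filter (fun T => ¬ T.card = 1), dv R
        = ∑ T ∈ K.filter (fun T => T ⊆ S), div u T := by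
      have hsubset : K.filter (fun T => T ⊆ S)
          ⊆ S.powerset.filter (fun T => ¬ T.card = 1) := by
        intro T hT
        rw [Finset.mem_filter] at hT
        have hc := (mem_K2.mp hT.1).1
        rw [Finset.mem_filter, Finset.mem_powerset]
        exact ⟨hT.2, by omega⟩
      have hzero : ∀ T ∈ S.powerset.filter (fun T => ¬ T.card = 1),
          T ∉ K.filter (fun T => T ⊆ S) → dv T = 0 := by
        intro T hT hT2
        rw [Finset.mem_filter, Finset.mem_powerset] at hT
        simp only [hdv, if_neg hT.2]
        rw [if_neg]
        intro hTK
        exact hT2 (Finset.mem_filter.mpr ⟨hTK, hT.1⟩)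
      have hcongr : ∀ T ∈ K.filter (fun T => T ⊆ S), dv T = div u T := by
        intro T hT
        rw [Finset.mem_filter] at hT
        have hc := (mem_K2.mp hT.1).1
        simp only [hdv]
        rw [if_neg (by omega), if_pos hT.1]
      calc ∑ R ∈ S.powerset.filter (fun T => ¬ T.card = 1), dv R
          = ∑ T ∈ K.filter (fun T => T ⊆ S), dv T :=
            (Finset.sum_subset hsubset hzero).symm
        _ = ∑ T ∈ K.filter (fun T => T ⊆ S), div u T :=
            Finset.sum_congr rfl hcongr
    rw [← hsplit, h1, h2]
    simp only [hv]
    ring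
  -- dividends of v are dv
  have hdivv : ∀ T, div v T = dv T := by
    intro T
    rw [hveq, div_g]
  -- K2 v = K
  have hK2v : K2 v = K := by
    ext T
    rw [mem_K2, hdivv]
    constructor
    · rintro ⟨hcard, hne⟩
      simp only [hdv, if_neg (by omega : ¬ T.card = 1)] at hne
      by_cases hTK : T ∈ K
      · exact hTK
      · rw [if_neg hTK] at hne
        simp at hne
    · intro hTK
      have h3 := mem_K2.mp hTK
      refine ⟨h3.1, ?_⟩
      simp only [hdv, if_neg (by omega : ¬ T.card = 1), if_pos hTK]
      exact h3.2
  have hm1v : m1 v = m1 u := by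
    unfold m1
    rw [hK2v]
  have hTstv : Tst v = Ts := by
    unfold Tst
    rw [hK2v]
    rfl
  -- ETP pairs inside Ts
  have hpair : ∀ j k : Fin n, j ∈ Ts → k ∈ Ts → j ≠ k →
      ∀ S : Finset (Fin n), j ∉ S → k ∉ S →
        v (insert j S) - v S = v (insert k S) - v S := by
    intro j k hjTs hkTs hjk S hjS hkS
    have e1 : v (insert j S) - v S = a := by
      refine hconst j S hjTs hjS ⟨k, hkTs, ?_⟩
      intro hmem
      rcases Finset.mem_insert.mp hmem with h' | h'
      · exact hjk h'.symm
      · exact hkS h'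
    have e2 : v (insert k S) - v S = a := by
      refine hconst k S hkTs hkS ⟨j, hjTs, ?_⟩
      intro hmem
      rcases Finset.mem_insert.mp hmem with h' | h'
      · exact hjk h'
      · exact hjS h'
    rw [e1, e2]
  -- ψ and shapley agree on v outside Ts
  have houtside : ∀ j, j ∉ Ts → ψ v j = shapley v j := by
    intro j hj
    refine caseA ψ hM v hvmono j (by rw [hTstv]; exact hj) ?_
    intro w hw hlt
    exact IH' w hw (by rw [hm1v] at hlt; exact hlt)
  -- sums
  have hsums : ∑ j, ψ v j = ∑ j, shapley v j := by
    rw [hPO v hvmono, shapley_PO hn v hv0]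
  have hTs_split_psi := Finset.sum_filter_add_sum_filter_not
    (Finset.univ : Finset (Fin n)) (fun j => j ∈ Ts) (fun j => ψ v j)
  have hTs_split_phi := Finset.sum_filter_add_sum_filter_not
    (Finset.univ : Finset (Fin n)) (fun j => j ∈ Ts) (fun j => shapley v j)
  have hout_eq : ∑ j ∈ Finset.univ.filter (fun j => j ∉ Ts), ψ v j
      = ∑ j ∈ Finset.univ.filter (fun j => j ∉ Ts), shapley v j := by
    refine Finset.sum_congr rfl fun j hj => ?_
    rw [Finset.mem_filter] at hj
    exact houtside j hj.2
  have hin_eq : ∑ j ∈ Finset.univ.filter (fun j => j ∈ Ts), ψ v j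
      = ∑ j ∈ Finset.univ.filter (fun j => j ∈ Ts), shapley v j := by
    linarith [hsums, hTs_split_psi, hTs_split_phi, hout_eq]
  -- all values inside Ts are equal
  have hpsi_const : ∀ j ∈ Ts, ψ v j = ψ v i := by
    intro j hjTs
    by_cases hij : j = i
    · rw [hij]
    · exact hETP v hvmono j i (hpair j i hjTs hi hij)
  have hphi_const : ∀ j ∈ Ts, shapley v j = shapley v i := by
    intro j hjTs
    by_cases hij : j = i
    · rw [hij]
    · exact shapley_ETP v j i (hpair j i hjTs hi hij)
  have hfilter_univ : Finset.univ.filter (fun j => j ∈ Ts) = Ts := by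
    ext j; simp
  have hcard_pos : 0 < Ts.card := Finset.card_pos.mpr ⟨i, hi⟩
  have hpsi_sum : ∑ j ∈ Finset.univ.filter (fun j => j ∈ Ts), ψ v j
      = (Ts.card : ℝ) * ψ v i := by
    rw [hfilter_univ, Finset.sum_congr rfl hpsi_const, Finset.sum_const, nsmul_eq_mul]
  have hphi_sum : ∑ j ∈ Finset.univ.filter (fun j => j ∈ Ts), shapley v j
      = (Ts.card : ℝ) * shapley v i := by
    rw [hfilter_univ, Finset.sum_congr rfl hphi_const, Finset.sum_const, nsmul_eq_mul]
  have hvi : ψ v i = shapley v i := by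
    have hne : (Ts.card : ℝ) ≠ 0 := ne_of_gt (by exact_mod_cast hcard_pos)
    have := hin_eq
    rw [hpsi_sum, hphi_sum] at this
    exact mul_left_cancel₀ hne this
  -- conclude
  have e1 : ψ u i = ψ v i := hM u v hu hvmono i hbmarg
  have e2 : shapley u i = shapley v i := shapley_M u v i hbmarg
  rw [e1, hvi, e2]
end ShapAux

/-- A solution ψ on the class of monotone games satisfies PO (Pareto optimality),
ETP (equal treatment property) and M (marginality) iff ψ is the Shapley value solution. -/
theorem shapley_uniqueness_marginality (n : ℕ) (hn : 1 ≤ n)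
    (ψ : (Finset (Fin n) → ℝ) → Fin n → ℝ) :
    ((∀ u, IsMonotoneGame n u → ∑ i, ψ u i = u Finset.univ) ∧
     (∀ u, IsMonotoneGame n u → ∀ i j : Fin n,
        (∀ S : Finset (Fin n), i ∉ S → j ∉ S →
          u (insert i S) - u S = u (insert j S) - u S) →
        ψ u i = ψ u j) ∧
     (∀ u v, IsMonotoneGame n u → IsMonotoneGame n v → ∀ i : Fin n,
        (∀ S : Finset (Fin n), u (insert i S) - u S = v (insert i S) - v S) →
        ψ u i = ψ v i)) ↔
    (∀ u, IsMonotoneGame n u → ∀ i, ψ u i = shapley u i) := by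
  constructor
  · rintro ⟨hPO, hETP, hM⟩
    exact ShapAux.uniq hn ψ hPO hETP hM
  · intro h
    refine ⟨?_, ?_, ?_⟩
    · intro u hu
      rw [Finset.sum_congr rfl fun i _ => h u hu i]
      exact ShapAux.shapley_PO hn u hu.1
    · intro u hu i j hsym
      rw [h u hu i, h u hu j]
      exact ShapAux.shapley_ETP u i j hsym
    · intro u v hu hv i hmarg
      rw [h u hu i, h v hv i]
      exact ShapAux.shapley_M u v i hmarg
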